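/- Let B be a C*-algebra that is the closure of an increasing union of C*-subalgebras C_0 ⊆ C_1 ⊆ C_2 ⊆ ⋯, and let (J_n) be a decreasing sequence of closed ideals of B such that C_m ∩ J_n = {0} whenever m < n. Then ⋂_n J_n = {0}. -/

import Mathlib

open scoped ContinuousMapZero

section Aux

variable {B : Type*} [CStarAlgebra B]

/-- The non-unital continuous functional calculus of an element of a closed non-unital star
subalgebra stays in the subalgebra (complex version). -/
lemma cfcn_mem_closed_complex (S : NonUnitalStarSubalgebra ℂ B) (hS : IsClosed (S : Set B))
    {c : B} (hc : c ∈ S) (f : ℂ → ℂ) : cfcₙ f c ∈ S := by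
  by_cases hn : IsStarNormal c
  swap
  · rw [cfcₙ_apply_of_not_predicate c hn]; exact S.zero_mem
  by_cases hf : ContinuousOn f (quasispectrum ℂ c)
  swap
  · rw [cfcₙ_apply_of_not_continuousOn c hf]; exact S.zero_mem
  by_cases hf0 : f 0 = 0
  swap
  · rw [cfcₙ_apply_of_not_map_zero c hf0]; exact S.zero_mem
  rw [cfcₙ_apply f c hf hf0 hn]
  have h0 : ((0 : quasispectrum ℂ c) : ℂ) = 0 := rfl
  have hid : cfcₙHom (a := c) hn (ContinuousMapZero.id (quasispectrum ℂ c)) = c := cfcₙHom_id hn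
  have key : ∀ g : C(quasispectrum ℂ c, ℂ)₀, cfcₙHom (a := c) hn g ∈ S := by
    intro g
    induction g using ContinuousMapZero.induction_on_of_compact with
    | zero => rw [map_zero]; exact S.zero_mem
    | id => rw [hid]; exact hc
    | star_id => rw [map_star, hid]; exact star_mem hc
    | add f g hf hg => rw [map_add]; exact S.add_mem hf hg
    | mul f g hf hg => rw [map_mul]; exact S.mul_mem hf hg
    | smul r f hf => rw [map_smul]; exact SMulMemClass.smul_mem r hf
    | frequently f hf =>
        have hcl : IsClosed {g : C(quasispectrum ℂ c, ℂ)₀ | cfcₙHom (a := c) hn g ∈ S} :=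
          hS.preimage (cfcₙHom_isClosedEmbedding hn).continuous
        exact hcl.closure_subset (mem_closure_iff_frequently.mpr hf)
  exact key _

/-- Real version of the membership lemma. -/
lemma cfcn_mem_closed_real (S : NonUnitalStarSubalgebra ℂ B) (hS : IsClosed (S : Set B))
    {c : B} (hc : c ∈ S) (hsa : IsSelfAdjoint c) (f : ℝ → ℝ) : cfcₙ f c ∈ S := by
  rw [cfcₙ_real_eq_complex f hsa]
  exact cfcn_mem_closed_complex S hS hc _

variable [PartialOrder B] [StarOrderedRing B]

lemma algebraMap_nonneg' {r : ℝ} (hr : 0 ≤ r) : 0 ≤ algebraMap ℝ B r := by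
  have hsa : IsSelfAdjoint (algebraMap ℝ B (Real.sqrt r)) :=
    IsSelfAdjoint.algebraMap B (by simp [IsSelfAdjoint])
  have h : algebraMap ℝ B r
      = star (algebraMap ℝ B (Real.sqrt r)) * algebraMap ℝ B (Real.sqrt r) := by
    rw [hsa.star_eq, ← map_mul, Real.mul_self_sqrt hr]
  rw [h]
  exact star_mul_self_nonneg _

/-- Closed two-sided ideals in a C*-algebra are hereditary. -/
lemma hereditary_of_isClosed (J : TwoSidedIdeal B) (hJ : IsClosed (J : Set B))
    {x b : B} (hb : b ∈ J) (hx : 0 ≤ x) (hxb : x ≤ b) : x ∈ J := by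
  have hb0 : 0 ≤ b := hx.trans hxb
  have hbsa : IsSelfAdjoint b := .of_nonneg hb0
  have hxsa : IsSelfAdjoint x := .of_nonneg hx
  have hspec : ∀ t ∈ spectrum ℝ b, 0 ≤ t := fun t ht => spectrum_nonneg_of_nonneg hb0 ht
  have hid_b : cfc (fun t : ℝ => t) b = b := cfc_id' (R := ℝ) (a := b) hbsa
  have hid_x : cfc (fun t : ℝ => t) x = x := cfc_id' (R := ℝ) (a := x) hxsa
  -- the square root of x
  set w : B := cfc Real.sqrt x with hw
  have hwsa : IsSelfAdjoint w := cfc_predicate _ x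
  have hww : w * w = x := by
    have h1 : cfc (fun t : ℝ => Real.sqrt t * Real.sqrt t) x
        = cfc Real.sqrt x * cfc Real.sqrt x :=
      cfc_mul Real.sqrt Real.sqrt x (by fun_prop) (by fun_prop)
    have h2 : cfc (fun t : ℝ => Real.sqrt t * Real.sqrt t) x = cfc (fun t : ℝ => t) x :=
      cfc_congr (fun t ht => Real.mul_self_sqrt (spectrum_nonneg_of_nonneg hx ht))
    rw [hw, ← h1, h2, hid_x]
  suffices h : x ∈ closure (J : Set B) by rwa [hJ.closure_eq] at h
  rw [Metric.mem_closure_iff]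
  intro η hη
  -- choose the parameter s > 0
  set s : ℝ := (η / (‖w‖ + 1)) ^ 2 with hs
  have hwpos : (0 : ℝ) < ‖w‖ + 1 := by positivity
  have hspos : 0 < s := by positivity
  have hne : ∀ t ∈ spectrum ℝ b, s + t ≠ 0 := by
    intro t ht
    have := hspec t ht
    positivity
  have hcont_inv : ContinuousOn (fun t : ℝ => (s + t)⁻¹) (spectrum ℝ b) :=
    ContinuousOn.inv₀ (by fun_prop) hne
  have hcont_u : ContinuousOn (fun t : ℝ => s * (s + t)⁻¹) (spectrum ℝ b) :=
    continuousOn_const.mul hcont_inv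
  have hcont_t : ContinuousOn (fun t : ℝ => t * (s + t)⁻¹) (spectrum ℝ b) :=
    continuousOn_id.mul hcont_inv
  -- the elements
  set k : B := cfc (fun t : ℝ => (s + t)⁻¹) b with hk
  set u : B := cfc (fun t : ℝ => s * (s + t)⁻¹) b with hu
  have husa : IsSelfAdjoint u := cfc_predicate _ b
  have hbk : b * k = cfc (fun t : ℝ => t * (s + t)⁻¹) b := by
    have h1 : cfc (fun t : ℝ => t * (s + t)⁻¹) b
        = cfc (fun t : ℝ => t) b * cfc (fun t : ℝ => (s + t)⁻¹) b :=
      cfc_mul (fun t : ℝ => t) (fun t : ℝ => (s + t)⁻¹) b (by fun_prop) hcont_inv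
    rw [hid_b] at h1
    rw [hk]
    exact h1.symm
  have hsum : u + b * k = 1 := by
    have hadd : cfc (fun t : ℝ => s * (s + t)⁻¹ + t * (s + t)⁻¹) b
        = cfc (fun t : ℝ => s * (s + t)⁻¹) b + cfc (fun t : ℝ => t * (s + t)⁻¹) b :=
      cfc_add (a := b) (f := fun t : ℝ => s * (s + t)⁻¹) (g := fun t : ℝ => t * (s + t)⁻¹)
        (hf := hcont_u) (hg := hcont_t)
    have hcongr : cfc (fun t : ℝ => s * (s + t)⁻¹ + t * (s + t)⁻¹) b
        = cfc (fun _ : ℝ => (1 : ℝ)) b :=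
      cfc_congr (fun t ht => by have h1 := hne t ht; field_simp)
    calc u + b * k
        = cfc (fun t : ℝ => s * (s + t)⁻¹) b + cfc (fun t : ℝ => t * (s + t)⁻¹) b := by
          rw [hu, hbk]
      _ = cfc (fun t : ℝ => s * (s + t)⁻¹ + t * (s + t)⁻¹) b := hadd.symm
      _ = cfc (fun _ : ℝ => (1 : ℝ)) b := hcongr
      _ = 1 := cfc_const_one ℝ b
  have hxmem : x * (b * k) ∈ J := J.mul_mem_left _ _ (J.mul_mem_right _ _ hb)
  refine ⟨x * (b * k), hxmem, ?_⟩
  have hxu : x - x * (b * k) = x * u := by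
    have h2 : u = 1 - b * k := eq_sub_of_add_eq hsum
    rw [h2, mul_sub, mul_one]
  rw [dist_eq_norm, hxu]
  -- estimate ‖x * u‖ = ‖w * (w * u)‖ ≤ ‖w‖ * ‖w * u‖
  have hxu2 : x * u = w * (w * u) := by rw [← mul_assoc, hww]
  have hwu_sq : ‖w * u‖ * ‖w * u‖ = ‖u * x * u‖ := by
    rw [← CStarRing.norm_star_mul_self (x := w * u), star_mul, hwsa.star_eq, husa.star_eq,
      mul_assoc u w (w * u), ← mul_assoc w w u, hww, ← mul_assoc]
  have huxu_nonneg : 0 ≤ u * x * u := by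
    have h1 := star_left_conjugate_nonneg (a := x) hx u
    rwa [husa.star_eq] at h1
  have huxu_le : u * x * u ≤ u * b * u := by
    have h1 := star_left_conjugate_le_conjugate hxb u
    rwa [husa.star_eq] at h1
  have hubu : u * b * u = cfc (fun t : ℝ => s * (s + t)⁻¹ * t * (s * (s + t)⁻¹)) b := by
    have hm1 : cfc (fun t : ℝ => s * (s + t)⁻¹ * t) b
        = cfc (fun t : ℝ => s * (s + t)⁻¹) b * cfc (fun t : ℝ => t) b :=
      cfc_mul (fun t : ℝ => s * (s + t)⁻¹) (fun t : ℝ => t) b hcont_u (by fun_prop)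
    have hm2 : cfc (fun t : ℝ => s * (s + t)⁻¹ * t * (s * (s + t)⁻¹)) b
        = cfc (fun t : ℝ => s * (s + t)⁻¹ * t) b * cfc (fun t : ℝ => s * (s + t)⁻¹) b :=
      cfc_mul (fun t : ℝ => s * (s + t)⁻¹ * t) (fun t : ℝ => s * (s + t)⁻¹) b
        (hcont_u.mul (by fun_prop)) hcont_u
    rw [hid_b] at hm1
    rw [hm2, hm1, ← hu]
  have hubu_norm : ‖u * b * u‖ ≤ s := by
    rw [hubu]
    apply norm_cfc_le hspos.le
    intro t ht
    have h1 := hspec t ht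
    have h2 : 0 < s + t := by positivity
    rw [Real.norm_eq_abs, abs_of_nonneg (by positivity)]
    have e1 : s * (s + t)⁻¹ ≤ 1 := by
      rw [mul_inv_le_iff₀ h2]; linarith
    have e2 : s * (s + t)⁻¹ * t ≤ s := by
      rw [mul_assoc, mul_comm ((s + t)⁻¹) t, ← mul_assoc, mul_inv_le_iff₀ h2]
      nlinarith
    have e3 : (0:ℝ) ≤ s * (s + t)⁻¹ := by positivity
    have e4 : (0:ℝ) ≤ s * (s + t)⁻¹ * t := by positivity
    calc s * (s + t)⁻¹ * t * (s * (s + t)⁻¹) ≤ s * 1 := by nlinarith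
      _ = s := mul_one s
  have hwu_norm : ‖w * u‖ ≤ Real.sqrt s := by
    have h1 : ‖u * x * u‖ ≤ s :=
      le_trans (CStarAlgebra.norm_le_norm_of_nonneg_of_le huxu_nonneg huxu_le) hubu_norm
    nlinarith [norm_nonneg (w * u), Real.sq_sqrt hspos.le, Real.sqrt_nonneg s, hwu_sq, h1]
  have hsqrt : Real.sqrt s = η / (‖w‖ + 1) := by
    rw [hs, Real.sqrt_sq (by positivity)]
  calc ‖x * u‖ = ‖w * (w * u)‖ := by rw [hxu2]
    _ ≤ ‖w‖ * ‖w * u‖ := norm_mul_le _ _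
    _ ≤ ‖w‖ * (η / (‖w‖ + 1)) := by
        refine mul_le_mul_of_nonneg_left ?_ (norm_nonneg w)
        rw [← hsqrt]; exact hwu_norm
    _ < η := by
        rw [div_eq_inv_mul, ← mul_assoc]
        have h2 : ‖w‖ * (‖w‖ + 1)⁻¹ < 1 := by
          rw [mul_inv_lt_iff₀ hwpos]; linarith [norm_nonneg w]
        nlinarith

end Aux

/-- Let `B` be a C*-algebra that is the closure of an increasing union of
C*-subalgebras `C 0 ⊆ C 1 ⊆ ⋯`, and let `(J n)` be a decreasing sequence of closed
(two-sided) ideals of `B` such that `C m ∩ J n = {0}` whenever `m < n`.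
Then `⋂ n, J n = {0}`. -/
theorem statement15
    {B : Type*} [CStarAlgebra B]
    (C : ℕ → NonUnitalStarSubalgebra ℂ B)
    (hCclosed : ∀ n, IsClosed (C n : Set B))
    (hCmono : Monotone C)
    (hCdense : Dense (⋃ n, (C n : Set B)))
    (J : ℕ → TwoSidedIdeal B)
    (hJclosed : ∀ n, IsClosed (J n : Set B))
    (hJanti : ∀ m n : ℕ, m ≤ n → (J n : Set B) ⊆ (J m : Set B))
    (hdisj : ∀ m n : ℕ, m < n → (C m : Set B) ∩ (J n : Set B) = {0}) :
    ⋂ n, (J n : Set B) = {0} := by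
  letI := CStarAlgebra.spectralOrder B
  haveI := CStarAlgebra.spectralOrderedRing B
  apply Set.eq_singleton_iff_unique_mem.mpr
  refine ⟨Set.mem_iInter.mpr fun n => (J n).zero_mem, ?_⟩
  intro x hx
  rw [Set.mem_iInter] at hx
  set a : B := star x * x with ha_def
  have ha_mem : ∀ n, a ∈ J n := fun n => (J n).mul_mem_left _ _ (hx n)
  have ha_nonneg : 0 ≤ a := star_mul_self_nonneg x
  have ha_sa : IsSelfAdjoint a := .of_nonneg ha_nonneg
  have key : ∀ ε : ℝ, 0 < ε → ‖a‖ ≤ 3 * ε := by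
    intro ε hε
    -- find an approximant in some `C m`
    obtain ⟨c₀, hc₀mem, hc₀⟩ := Metric.mem_closure_iff.mp (hCdense a) ε hε
    obtain ⟨s, ⟨m, rfl⟩, hm⟩ := hc₀mem
    -- symmetrize the approximant
    set c : B := ((2 : ℂ)⁻¹) • (c₀ + star c₀) with hc_def
    have hc_mem : c ∈ C m :=
      SMulMemClass.smul_mem ((2 : ℂ)⁻¹) (add_mem hm (star_mem hm))
    have hc_sa : IsSelfAdjoint c := by
      have h : star c = c := by
        rw [hc_def, star_smul, star_add, star_star]
        simp [add_comm]
      exact h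
    have hca : ‖c - a‖ ≤ ε := by
      have h1 : c - a = ((2 : ℂ)⁻¹) • ((c₀ - a) + star (c₀ - a)) := by
        rw [star_sub, ha_sa.star_eq, hc_def]
        module
      have h2 : ‖c₀ - a‖ ≤ ε := by
        have h3 := hc₀
        rw [dist_eq_norm, norm_sub_rev] at h3
        exact h3.le
      calc ‖c - a‖ = ‖(2 : ℂ)⁻¹‖ * ‖(c₀ - a) + star (c₀ - a)‖ := by rw [h1, norm_smul]
        _ ≤ ‖(2 : ℂ)⁻¹‖ * (‖c₀ - a‖ + ‖star (c₀ - a)‖) := by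
            gcongr
            exact norm_add_le _ _
        _ = 2⁻¹ * (‖c₀ - a‖ + ‖c₀ - a‖) := by rw [norm_star]; norm_num
        _ ≤ 2⁻¹ * (ε + ε) := by gcongr
        _ = ε := by ring
    -- the functions
    set f : ℝ → ℝ := fun t => max (t - 2*ε) 0 with hf_def
    set g : ℝ → ℝ := fun t => Real.sqrt (max (t - 2*ε) 0 / max (t - ε) ε) with hg_def
    have hden_pos : ∀ t : ℝ, 0 < max (t - ε) ε := fun t => lt_of_lt_of_le hε (le_max_right _ _)
    have hg_cont : Continuous g := by
      rw [hg_def]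
      apply Real.continuous_sqrt.comp
      exact Continuous.div (by fun_prop) (by fun_prop) (fun t => (hden_pos t).ne')
    have hf_cont : Continuous f := by rw [hf_def]; fun_prop
    have hid_c : cfc (fun t : ℝ => t) c = c := cfc_id' (R := ℝ) (a := c) hc_sa
    set G : B := cfc g c with hG_def
    have hGsa : IsSelfAdjoint G := cfc_predicate _ c
    have hkey_id : ∀ t : ℝ, g t * (t - ε) * g t = f t := by
      intro t
      simp only [hg_def, hf_def]
      have hden := hden_pos t
      have hnum : (0:ℝ) ≤ max (t - 2*ε) 0 := le_max_right _ _
      have hsq : Real.sqrt (max (t - 2*ε) 0 / max (t - ε) ε)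
          * Real.sqrt (max (t - 2*ε) 0 / max (t - ε) ε)
          = max (t - 2*ε) 0 / max (t - ε) ε :=
        Real.mul_self_sqrt (by positivity)
      have hre : ∀ y : ℝ, y * (t - ε) * y = (y * y) * (t - ε) := fun y => by ring
      rw [hre, hsq]
      rcases le_or_gt t (2*ε) with h | h
      · have h0 : max (t - 2*ε) 0 = 0 := max_eq_right (by linarith)
        rw [h0, zero_div, zero_mul]
      · have hmax : max (t - ε) ε = t - ε := max_eq_left (by linarith)
        have h0 : max (t - 2*ε) 0 = t - 2*ε := max_eq_left (by linarith)
        rw [hmax, h0, div_mul_cancel₀]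
        linarith
    have hf0 : f 0 = 0 := by
      simp only [hf_def]
      exact max_eq_right (by linarith)
    set q : B := cfc f c with hq_def
    have hq_nonneg : 0 ≤ q := by
      rw [hq_def]
      exact cfc_nonneg (fun t _ => by simp only [hf_def]; exact le_max_right _ _)
    -- c - ε ≤ a
    have hstep1 : c - algebraMap ℝ B ε ≤ a := by
      have h1 : c - a ≤ algebraMap ℝ B ‖c - a‖ := (hc_sa.sub ha_sa).le_algebraMap_norm_self
      have h2 : algebraMap ℝ B ‖c - a‖ ≤ algebraMap ℝ B ε := by
        rw [← sub_nonneg, ← map_sub]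
        exact algebraMap_nonneg' (by linarith)
      exact sub_le_comm.mp (h1.trans h2)
    have hcε : c - algebraMap ℝ B ε = cfc (fun t : ℝ => t - ε) c := by
      have h := cfc_sub (fun t : ℝ => t) (fun _ : ℝ => ε) c (by fun_prop) (by fun_prop)
      rw [hid_c, cfc_const ε c hc_sa] at h
      exact h.symm
    have hqGG : q = G * (c - algebraMap ℝ B ε) * G := by
      have hm2 : cfc (fun t : ℝ => g t * (t - ε)) c = G * cfc (fun t : ℝ => t - ε) c := by
        rw [hG_def]
        exact cfc_mul g (fun t : ℝ => t - ε) c hg_cont.continuousOn (by fun_prop)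
      have hm1 : cfc (fun t : ℝ => g t * (t - ε) * g t) c
          = cfc (fun t : ℝ => g t * (t - ε)) c * G := by
        rw [hG_def]
        exact cfc_mul (fun t : ℝ => g t * (t - ε)) g c
          (hg_cont.continuousOn.mul (by fun_prop)) hg_cont.continuousOn
      have hcongr : cfc (fun t : ℝ => g t * (t - ε) * g t) c = cfc f c :=
        cfc_congr (fun t _ => hkey_id t)
      rw [hq_def, ← hcongr, hm1, hm2, ← hcε]
    have hb' : G * a * G ∈ J (m+1) :=
      (J (m+1)).mul_mem_right _ _ ((J (m+1)).mul_mem_left _ _ (ha_mem (m+1)))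
    have hq_le : q ≤ G * a * G := by
      rw [hqGG]
      have h1 := star_left_conjugate_le_conjugate hstep1 G
      rwa [hGsa.star_eq] at h1
    have hq_memJ : q ∈ J (m+1) :=
      hereditary_of_isClosed (J (m+1)) (hJclosed (m+1)) hb' hq_nonneg hq_le
    have hq_memC : q ∈ C m := by
      have h1 : cfcₙ f c ∈ C m := cfcn_mem_closed_real (C m) (hCclosed m) hc_mem hc_sa f
      rwa [cfcₙ_eq_cfc (hf_cont.continuousOn) hf0, ← hq_def] at h1
    have hq0 : q = 0 := by
      have h1 : q ∈ (C m : Set B) ∩ (J (m+1) : Set B) := ⟨hq_memC, hq_memJ⟩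
      rw [hdisj m (m+1) (Nat.lt_succ_self m)] at h1
      exact h1
    -- conclude c ≤ 2ε and then a ≤ 3ε
    have hc_le : c ≤ algebraMap ℝ B (2*ε) := by
      refine le_algebraMap_of_spectrum_le (fun t ht => ?_) hc_sa
      have h1 : cfc f c = cfc (fun _ : ℝ => (0:ℝ)) c := by
        rw [← hq_def, hq0]
        exact (cfc_const_zero ℝ c).symm
      have h2 : f t = 0 :=
        eqOn_of_cfc_eq_cfc h1 (hf_cont.continuousOn) (by fun_prop) hc_sa ht
      by_contra h4
      push_neg at h4
      simp only [hf_def] at h2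
      rw [max_eq_left (by linarith)] at h2
      linarith
    have ha_le : a ≤ algebraMap ℝ B (3*ε) := by
      have h1 : a - c ≤ algebraMap ℝ B ε := by
        have h2 : a - c ≤ algebraMap ℝ B ‖a - c‖ := (ha_sa.sub hc_sa).le_algebraMap_norm_self
        have h3 : algebraMap ℝ B ‖a - c‖ ≤ algebraMap ℝ B ε := by
          rw [← sub_nonneg, ← map_sub]
          exact algebraMap_nonneg' (by rw [norm_sub_rev]; linarith)
        exact h2.trans h3
      calc a = (a - c) + c := by abel
        _ ≤ algebraMap ℝ B ε + algebraMap ℝ B (2*ε) := add_le_add h1 hc_le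
        _ = algebraMap ℝ B (3*ε) := by rw [← map_add]; ring_nf
    exact (CStarAlgebra.norm_le_iff_le_algebraMap a (by positivity)).mpr ha_le
  -- finish
  have hnorm : ‖a‖ ≤ 0 := by
    by_contra h
    push_neg at h
    have h1 := key (‖a‖/6) (by linarith)
    linarith
  have ha0 : a = 0 := norm_le_zero_iff.mp hnorm
  exact (CStarRing.star_mul_self_eq_zero_iff x).mp ha0
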